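/- For every choice of (a,b) ∈ {2,3}^2, the 5×5 symmetric matrix with rows (0,1,2,a,2),(1,0,1,2,1),(2,1,0,1,2),(a,2,1,0,b),(2,1,2,b,0) has second largest eigenvalue strictly greater than (17-√329)/2. -/

import Mathlib

noncomputable def sortedEigenvalues {ι : Type*} [Fintype ι] [DecidableEq ι]
    (A : Matrix ι ι ℝ) (hA : A.IsHermitian) : List ℝ :=
  (Finset.univ.val.map hA.eigenvalues).sort (· ≤ ·)

/-- `eig A hA k` is the `k`-th largest eigenvalue of `A` (1-indexed). -/
noncomputable def eig {ι : Type*} [Fintype ι] [DecidableEq ι]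
    (A : Matrix ι ι ℝ) (hA : A.IsHermitian) (k : ℕ) : ℝ :=
  (sortedEigenvalues A hA)[Fintype.card ι - k]!

open Matrix

private lemma detProd {n : Type*} [Fintype n] [DecidableEq n] (A : Matrix n n ℝ)
    (hA : A.IsHermitian) (c : ℝ) :
    (c • (1 : Matrix n n ℝ) - A).det = ∏ i, (c - hA.eigenvalues i) := by
  have hUU : (hA.eigenvectorUnitary : Matrix n n ℝ) * star (hA.eigenvectorUnitary : Matrix n n ℝ)
      = 1 := Matrix.mem_unitaryGroup_iff.mp hA.eigenvectorUnitary.2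
  have key : c • (1 : Matrix n n ℝ) - A
      = (hA.eigenvectorUnitary : Matrix n n ℝ) * diagonal (fun i => c - hA.eigenvalues i) *
        star (hA.eigenvectorUnitary : Matrix n n ℝ) := by
    conv_lhs => rw [hA.spectral_theorem, Unitary.conjStarAlgAut_apply]
    have hd : diagonal (fun i => c - hA.eigenvalues i)
        = c • (1 : Matrix n n ℝ) - diagonal (RCLike.ofReal ∘ hA.eigenvalues) := by
      rw [smul_one_eq_diagonal, ← diagonal_sub]
      congr 1
    rw [hd, Matrix.mul_sub, Matrix.sub_mul, Matrix.mul_smul, Matrix.mul_one, Matrix.smul_mul, hUU]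
  rw [key, Matrix.det_mul_right_comm, hUU, Matrix.one_mul, Matrix.det_diagonal]

private lemma traceSum {n : Type*} [Fintype n] [DecidableEq n] (A : Matrix n n ℝ)
    (hA : A.IsHermitian) : A.trace = ∑ i, hA.eigenvalues i := by
  have hUU : star (hA.eigenvectorUnitary : Matrix n n ℝ) * (hA.eigenvectorUnitary : Matrix n n ℝ)
      = 1 := Matrix.mem_unitaryGroup_iff'.mp hA.eigenvectorUnitary.2
  conv_lhs => rw [hA.spectral_theorem, Unitary.conjStarAlgAut_apply]
  rw [Matrix.trace_mul_cycle, hUU, Matrix.one_mul, Matrix.trace_diagonal]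
  rfl

private lemma main5 (A : Matrix (Fin 5) (Fin 5) ℝ) (hA : A.IsHermitian) (c : ℝ) (hc : c < 0)
    (htr : A.trace = 0) (hdet : 0 < (c • (1 : Matrix (Fin 5) (Fin 5) ℝ) - A).det) :
    c < eig A hA 2 := by
  by_contra hle
  push_neg at hle
  have hmult : ((sortedEigenvalues A hA : List ℝ) : Multiset ℝ)
      = Finset.univ.val.map hA.eigenvalues := Multiset.sort_eq _ _
  have hlen : (sortedEigenvalues A hA).length = 5 := by
    simp [sortedEigenvalues]
  have hsort : (sortedEigenvalues A hA).Pairwise (· ≤ ·) := Multiset.pairwise_sort _ _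
  have hprod : (c • (1 : Matrix (Fin 5) (Fin 5) ℝ) - A).det
      = ((sortedEigenvalues A hA).map (fun x => c - x)).prod := by
    have hmm : (((sortedEigenvalues A hA).map (fun x => c - x) : List ℝ) : Multiset ℝ)
        = Multiset.map (fun i => c - hA.eigenvalues i) Finset.univ.val := by
      rw [← Multiset.map_coe, hmult, Multiset.map_map]
      rfl
    rw [detProd A hA c, Finset.prod_eq_multiset_prod, ← hmm, Multiset.prod_coe]
  have hsum : (sortedEigenvalues A hA).sum = 0 := by
    have h1 : ((sortedEigenvalues A hA : List ℝ) : Multiset ℝ).sum = A.trace := by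
      rw [hmult, traceSum A hA, Finset.sum_eq_multiset_sum]
    rw [Multiset.sum_coe] at h1
    rw [h1, htr]
  have heig : eig A hA 2 = (sortedEigenvalues A hA)[3]! := by
    simp [eig]
  obtain ⟨x0, x1, x2, x3, x4, hl⟩ : ∃ x0 x1 x2 x3 x4,
      sortedEigenvalues A hA = [x0, x1, x2, x3, x4] := by
    rcases hlist : sortedEigenvalues A hA with
      _ | ⟨x0, _ | ⟨x1, _ | ⟨x2, _ | ⟨x3, _ | ⟨x4, _ | ⟨x5, t⟩⟩⟩⟩⟩⟩ <;> simp_all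
  rw [hl] at hsort hprod hsum heig
  simp [List.pairwise_cons] at hsort
  simp at hprod heig
  rw [heig] at hle
  obtain ⟨⟨h01, h02, h03, h04⟩, ⟨h12, h13, h14⟩, ⟨h23, h24⟩, h34⟩ := hsort
  have hx4 : 0 ≤ x4 := by simp at hsum; linarith
  have hfac : (c - x0) * ((c - x1) * ((c - x2) * ((c - x3) * (c - x4)))) ≤ 0 := by
    have t3 : (c - x3) * (c - x4) ≤ 0 :=
      mul_nonpos_iff.mpr (Or.inl ⟨by linarith, by linarith⟩)
    have t2 : (c - x2) * ((c - x3) * (c - x4)) ≤ 0 :=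
      mul_nonpos_iff.mpr (Or.inl ⟨by linarith, t3⟩)
    have t1 : (c - x1) * ((c - x2) * ((c - x3) * (c - x4))) ≤ 0 :=
      mul_nonpos_iff.mpr (Or.inl ⟨by linarith, t2⟩)
    exact mul_nonpos_iff.mpr (Or.inl ⟨by linarith, t1⟩)
  rw [hprod] at hdet
  nlinarith [hfac, hdet]

private lemma smul_sub_explicit (c a b : ℝ) :
    c • (1 : Matrix (Fin 5) (Fin 5) ℝ)
      - !![0,1,2,a,2;1,0,1,2,1;2,1,0,1,2;a,2,1,0,b;2,1,2,b,0]
    = !![c,-1,-2,-a,-2;-1,c,-1,-2,-1;-2,-1,c,-1,-2;-a,-2,-1,c,-b;-2,-1,-2,-b,c] := by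
  ext i j
  fin_cases i <;> fin_cases j <;>
    simp [Matrix.sub_apply, Matrix.smul_apply, Matrix.one_apply]

set_option maxHeartbeats 2000000 in
private lemma det5 (c a b : ℝ) :
    (!![c,-1,-2,-a,-2;-1,c,-1,-2,-1;-2,-1,c,-1,-2;-a,-2,-1,c,-b;-2,-1,-2,-b,c]).det
    = c^5 - (20+a^2+b^2)*c^3 - (32+8*a+8*b+4*a*b)*c^2
      + (26-26*a-26*b-10*a*b+6*a^2+6*b^2)*c + (52-20*a-20*b+4*a^2+4*b^2-4*a*b) := by
  have e1 : (Fin.castSucc (2 : Fin 4) : Fin 5) = 2 := rfl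
  have e2 : (Fin.castSucc (2 : Fin 3) : Fin 4) = 2 := rfl
  have e3 : (Fin.castSucc (3 : Fin 4) : Fin 5) = 3 := rfl
  have e4 : (Fin.castSucc (1 : Fin 3) : Fin 4) = 1 := rfl
  have e5 : (Fin.succ (2 : Fin 3) : Fin 4) = 3 := rfl
  have e6 : (Fin.succ (2 : Fin 4) : Fin 5) = 3 := rfl
  have e7 : (Fin.succ (3 : Fin 4) : Fin 5) = 4 := rfl
  have e8 : (Fin.castSucc (1 : Fin 4) : Fin 5) = 1 := rfl
  have e10 : (Fin.succ (1 : Fin 3) : Fin 4) = 2 := rfl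
  have e11 : (Fin.succ (1 : Fin 2) : Fin 3) = 2 := rfl
  have e12 : (Fin.castSucc (1 : Fin 2) : Fin 3) = 1 := rfl
  simp +decide [Matrix.det_succ_row_zero, Fin.sum_univ_succ, Fin.succAbove,
    e1, e2, e3, e4, e5, e6, e7, e8, e10, e11, e12]
  ring

private lemma trace0 (a b : ℝ) :
    (!![(0:ℝ),1,2,a,2;1,0,1,2,1;2,1,0,1,2;a,2,1,0,b;2,1,2,b,0]).trace = 0 := by
  simp [Matrix.trace, Fin.sum_univ_five]

theorem forbidden_H2_submatrices (a b : ℝ)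
    (ha : a = 2 ∨ a = 3) (hb : b = 2 ∨ b = 3)
    (h : (!![(0:ℝ),1,2,a,2;1,0,1,2,1;2,1,0,1,2;a,2,1,0,b;2,1,2,b,0]).IsHermitian) :
    eig _ h 2 > (17 - Real.sqrt 329) / 2 := by
  have hs : Real.sqrt 329 ^ 2 = 329 := Real.sq_sqrt (by norm_num)
  have hsnn : 0 ≤ Real.sqrt 329 := Real.sqrt_nonneg 329
  set s := Real.sqrt 329 with hsdef
  have hc : (17 - s) / 2 < 0 := by nlinarith
  have hs3 : s ^ 3 = 329 * s := by linear_combination s * hs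
  have hs4 : s ^ 4 = 329 * 329 := by linear_combination (s ^ 2 + 329) * hs
  have hs5 : s ^ 5 = 329 ^ 2 * s := by linear_combination (s ^ 3 + 329 * s) * hs
  have hdet : 0 < (((17 - s) / 2) •
      (1 : Matrix (Fin 5) (Fin 5) ℝ) -
      !![(0:ℝ),1,2,a,2;1,0,1,2,1;2,1,0,1,2;a,2,1,0,b;2,1,2,b,0]).det := by
    rw [smul_sub_explicit ((17 - s) / 2) a b, det5]
    rcases ha with rfl | rfl <;> rcases hb with rfl | rfl <;> ring_nf
    · have key : 0 < (1496229 : ℝ) - 82489 * s := by nlinarith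
      linarith [key, hs, hs3, hs4, hs5]
    · have key : 0 < (731941 : ℝ) - 40353 * s := by nlinarith
      linarith [key, hs, hs3, hs4, hs5]
    · have key : 0 < (731941 : ℝ) - 40353 * s := by nlinarith
      linarith [key, hs, hs3, hs4, hs5]
    · have key : 0 < (1430121 : ℝ) - 78845 * s := by nlinarith
      linarith [key, hs, hs3, hs4, hs5]
  exact main5 _ h _ hc (trace0 a b) hdet
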